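/- arXiv:1602.05610 — 2 statements merged into one kernel-verified Lean document; each statement's English description precedes it below -/
import Mathlib

section
/- (Lemma 1, functions with linear argument.) Let σ > 0, n ≥ 1, let f : ℝ → ℝ be measurable, and let x, w ∈ ℝⁿ with x ≠ 0. Assume the function t ↦ f(⟨t, x⟩) k_σ(w − t) is integrable on ℝⁿ, where ⟨·,·⟩ denotes the Euclidean inner product. Then ∫_{ℝⁿ} f(⟨t, x⟩) k_σ(w − t) dt = ∫_ℝ f(y) k_{σ‖x‖}(⟨w, x⟩ − y) dy; that is, the n-dimensional Gaussian smoothing of w ↦ f(⟨w, x⟩) at w equals the one-dimensional Gaussian smoothing of f with parameter σ‖x‖ evaluated at ⟨w, x⟩. -/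
open MeasureTheory
open scoped RealInnerProductSpace

/-- Isotropic Gaussian kernel on `ℝⁿ`: `k_σ(x) = (√(2π) σ)^{-n} exp(−‖x‖²/(2σ²))`. -/
noncomputable def gaussKernel (σ : ℝ) {n : ℕ} (x : EuclideanSpace ℝ (Fin n)) : ℝ :=
  ((Real.sqrt (2 * Real.pi) * σ)⁻¹) ^ n * Real.exp (-‖x‖ ^ 2 / (2 * σ ^ 2))

/-- One-dimensional Gaussian kernel. -/
noncomputable def gauss1 (σ x : ℝ) : ℝ :=
  (Real.sqrt (2 * Real.pi) * σ)⁻¹ * Real.exp (-x ^ 2 / (2 * σ ^ 2))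

lemma integral_gauss1 (σ : ℝ) (hσ : 0 < σ) : ∫ s : ℝ, gauss1 σ s = 1 := by
  unfold gauss1
  rw [integral_const_mul]
  have h : ∀ s : ℝ, -s ^ 2 / (2 * σ ^ 2) = -(2 * σ ^ 2)⁻¹ * s ^ 2 := by
    intro s; field_simp
  simp_rw [h]
  rw [integral_gaussian]
  have h2 : Real.pi / (2 * σ ^ 2)⁻¹ = (2 * Real.pi) * σ ^ 2 := by
    field_simp
  have h3 : Real.sqrt (2 * Real.pi * σ ^ 2) = Real.sqrt (2 * Real.pi) * σ := by
    rw [Real.sqrt_mul (by positivity), Real.sqrt_sq hσ.le]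
  rw [h2, h3, inv_mul_cancel₀ (by positivity)]

lemma integral_gauss1_sub (σ c : ℝ) (hσ : 0 < σ) : ∫ s : ℝ, gauss1 σ (c - s) = 1 := by
  rw [integral_sub_left_eq_self (gauss1 σ) volume c]
  exact integral_gauss1 σ hσ

lemma gauss1_scale (σ z r : ℝ) (hσ : 0 < σ) (hr : 0 < r) :
    gauss1 (σ * r) (r * z) = r⁻¹ * gauss1 σ z := by
  unfold gauss1
  have h1 : -(r * z) ^ 2 / (2 * (σ * r) ^ 2) = -z ^ 2 / (2 * σ ^ 2) := by
    field_simp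
  rw [h1, mul_inv, mul_inv, mul_inv]
  ring

lemma gaussKernel_eq_prod (σ : ℝ) {n : ℕ} (v : EuclideanSpace ℝ (Fin n)) :
    gaussKernel σ v = ∏ i, gauss1 σ (v i) := by
  unfold gaussKernel gauss1
  rw [Finset.prod_mul_distrib, Finset.prod_const, ← Real.exp_sum]
  congr 2
  · simp
  · rw [EuclideanSpace.norm_eq, Real.sq_sqrt (by positivity)]
    rw [← Finset.sum_div, ← Finset.sum_neg_distrib]
    congr 1
    congr 1
    funext i
    rw [Real.norm_eq_abs, sq_abs]

lemma gaussKernel_norm_eq (σ : ℝ) {n : ℕ} {a b : EuclideanSpace ℝ (Fin n)}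
    (h : ‖a‖ = ‖b‖) : gaussKernel σ a = gaussKernel σ b := by
  unfold gaussKernel; rw [h]

theorem gaussian_smoothing_linear_argument (σ : ℝ) (hσ : 0 < σ) (n : ℕ) (hn : 1 ≤ n)
    (f : ℝ → ℝ) (hf : Measurable f) (x w : EuclideanSpace ℝ (Fin n)) (hx : x ≠ 0)
    (hint : Integrable (fun t : EuclideanSpace ℝ (Fin n) => f ⟪t, x⟫ * gaussKernel σ (w - t))) :
    (∫ t : EuclideanSpace ℝ (Fin n), f ⟪t, x⟫ * gaussKernel σ (w - t)) =
      ∫ y : ℝ, f y * gauss1 (σ * ‖x‖) (⟪w, x⟫ - y) := by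
  have hxn : ‖x‖ ≠ 0 := norm_ne_zero_iff.mpr hx
  have hxp : (0:ℝ) < ‖x‖ := norm_pos_iff.mpr hx
  set i0 : Fin n := ⟨0, hn⟩ with hi0
  -- construct an orthonormal basis whose `i0`-th vector is `x/‖x‖`
  have hcard : Module.finrank ℝ (EuclideanSpace ℝ (Fin n)) = Fintype.card (Fin n) := by
    simp [finrank_euclideanSpace]
  have horth : Orthonormal ℝ (({i0} : Set (Fin n)).restrict
      (fun _ : Fin n => ‖x‖⁻¹ • x)) := by
    constructor
    · intro i
      show ‖‖x‖⁻¹ • x‖ = 1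
      rw [norm_smul, norm_inv, norm_norm, inv_mul_cancel₀ hxn]
    · intro i j hij
      exact absurd (Subtype.ext ((Set.mem_singleton_iff.mp i.2).trans
        (Set.mem_singleton_iff.mp j.2).symm)) hij
  obtain ⟨b, hb⟩ :=
    Orthonormal.exists_orthonormalBasis_extension_of_card_eq hcard horth
  have hb0 : b i0 = ‖x‖⁻¹ • x := hb i0 rfl
  have hxb : x = ‖x‖ • b i0 := by
    rw [hb0, smul_smul, mul_inv_cancel₀ hxn, one_smul]
  set c : EuclideanSpace ℝ (Fin n) := b.repr w with hc
  have hemb : MeasurableEmbedding (⇑b.repr.symm) :=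
    MeasurableEquiv.measurableEmbedding b.measurableEquiv.symm
  have hemb2 : MeasurableEmbedding (⇑(MeasurableEquiv.toLp 2 (Fin n → ℝ))) :=
    MeasurableEquiv.measurableEmbedding _
  have hc0 : ⟪w, x⟫ = ‖x‖ * c i0 := by
    rw [hc, OrthonormalBasis.repr_apply_apply, hb0, real_inner_smul_left,
      real_inner_comm]
    field_simp
  calc (∫ t : EuclideanSpace ℝ (Fin n), f ⟪t, x⟫ * gaussKernel σ (w - t))
      = ∫ u : EuclideanSpace ℝ (Fin n),
          f ⟪b.repr.symm u, x⟫ * gaussKernel σ (w - b.repr.symm u) :=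
        (b.measurePreserving_repr_symm.integral_comp hemb
          (fun t => f ⟪t, x⟫ * gaussKernel σ (w - t))).symm
    _ = ∫ u : EuclideanSpace ℝ (Fin n),
          f (‖x‖ * u i0) * ∏ i, gauss1 σ (c i - u i) := by
        congr 1; funext u
        have h1 : ⟪b.repr.symm u, x⟫ = ‖x‖ * u i0 := by
          conv_lhs => rw [hxb]
          rw [real_inner_smul_right, real_inner_comm,
            ← OrthonormalBasis.repr_apply_apply, LinearIsometryEquiv.apply_symm_apply]
        have h2 : gaussKernel σ (w - b.repr.symm u) = ∏ i, gauss1 σ (c i - u i) := by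
          rw [gaussKernel_norm_eq σ (b := c - u), gaussKernel_eq_prod]
          · exact Finset.prod_congr rfl fun i _ => by
              simp [hc]
          · rw [hc, ← LinearIsometryEquiv.norm_map b.repr (w - b.repr.symm u)]
            simp
        rw [h1, h2]
    _ = ∫ y : (Fin n) → ℝ,
          f (‖x‖ * y i0) * ∏ i, gauss1 σ (c i - y i) := by
        have hmp : MeasurePreserving (MeasurableEquiv.toLp 2 (Fin n → ℝ))
            volume volume := (EuclideanSpace.volume_preserving_symm_measurableEquiv_toLp (Fin n)).symm
        rw [← hmp.integral_comp hemb2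
          (fun u : EuclideanSpace ℝ (Fin n) => f (‖x‖ * u i0) * ∏ i, gauss1 σ (c i - u i))]
        rfl
    _ = ∫ y : (Fin n) → ℝ,
          ∏ i, ((if i = i0 then f (‖x‖ * y i) else 1) * gauss1 σ (c i - y i)) := by
        congr 1; funext y
        rw [Finset.prod_mul_distrib, Finset.prod_ite_eq' Finset.univ i0
          (fun i => f (‖x‖ * y i))]
        simp
    _ = ∏ i, ∫ s : ℝ, (if i = i0 then f (‖x‖ * s) else 1) * gauss1 σ (c i - s) :=
        integral_fintype_prod_eq_prod (ι := Fin n)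
          (fun i s => (if i = i0 then f (‖x‖ * s) else 1) * gauss1 σ (c i - s))
    _ = ∫ s : ℝ, f (‖x‖ * s) * gauss1 σ (c i0 - s) := by
        rw [Finset.prod_eq_single i0]
        · simp
        · intro i _ hne
          simp only [if_neg hne, one_mul]
          exact integral_gauss1_sub σ (c i) hσ
        · simp
    _ = ∫ y : ℝ, f y * gauss1 (σ * ‖x‖) (⟪w, x⟫ - y) := by
        have key : ∀ s : ℝ, f (‖x‖ * s) * gauss1 (σ * ‖x‖) (⟪w, x⟫ - ‖x‖ * s)
            = ‖x‖⁻¹ * (f (‖x‖ * s) * gauss1 σ (c i0 - s)) := by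
          intro s
          rw [hc0, ← mul_sub, gauss1_scale σ _ _ hσ hxp]
          ring
        have h := MeasureTheory.Measure.integral_comp_mul_left
          (fun y => f y * gauss1 (σ * ‖x‖) (⟪w, x⟫ - y)) ‖x‖
        simp only [key] at h
        rw [integral_const_mul, abs_inv, abs_of_pos hxp, smul_eq_mul] at h
        exact mul_left_cancel₀ (inv_ne_zero hxn) h
end

section
/- Let σ > 0, n ≥ 1, and let x, w ∈ ℝⁿ with x ≠ 0. Then ∫_{ℝⁿ} max(0, ⟨t, x⟩) · k_σ(w − t) dt = (σ‖x‖/√(2π)) exp(−⟨w, x⟩²/(2σ²‖x‖²)) + (1/2) ⟨w, x⟩ (1 + erf( ⟨w, x⟩ / (√2 σ ‖x‖) )), where ⟨·,·⟩ denotes the Euclidean inner product. -/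
open MeasureTheory
open scoped RealInnerProductSpace

/-- The error function `erf(x) = (2/√π) ∫₀ˣ e^{−t²} dt`. -/
noncomputable def erf (x : ℝ) : ℝ :=
  (2 / Real.sqrt Real.pi) * ∫ t in (0 : ℝ)..x, Real.exp (-t ^ 2)

open Real Set Filter

lemma tendsto_exp_sq (σ a : ℝ) (hσ : 0 < σ) :
    Tendsto (fun t : ℝ => Real.exp (-(t - a) ^ 2 / (2 * σ ^ 2))) atTop (nhds 0) := by
  apply Real.tendsto_exp_atBot.comp
  have h1 : Tendsto (fun t : ℝ => (t - a) ^ 2) atTop atTop :=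
    (tendsto_pow_atTop two_ne_zero).comp (tendsto_atTop_add_const_right _ (-a) tendsto_id)
  have h2 : Tendsto (fun y : ℝ => -y / (2 * σ ^ 2)) atTop atBot := by
    apply Tendsto.atBot_div_const (by positivity)
    exact tendsto_neg_atBot_iff.mpr tendsto_id
  exact h2.comp h1

lemma L1 (σ a : ℝ) (hσ : 0 < σ) :
    ∫ t in Ioi (0 : ℝ), (t - a) * Real.exp (-(t - a) ^ 2 / (2 * σ ^ 2))
      = σ ^ 2 * Real.exp (-a ^ 2 / (2 * σ ^ 2)) := by
  have hb : (0 : ℝ) < (2 * σ ^ 2)⁻¹ := by positivity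
  have hderiv : ∀ t ∈ Ici (0 : ℝ),
      HasDerivAt (fun t : ℝ => -σ ^ 2 * Real.exp (-(t - a) ^ 2 / (2 * σ ^ 2)))
        ((t - a) * Real.exp (-(t - a) ^ 2 / (2 * σ ^ 2))) t := by
    intro t _
    have h1 : HasDerivAt (fun t : ℝ => -(t - a) ^ 2 / (2 * σ ^ 2))
        (-(2 * (t - a)) / (2 * σ ^ 2)) t := by
      have : HasDerivAt (fun t : ℝ => (t - a) ^ 2) (2 * (t - a)) t := by
        simpa using ((hasDerivAt_id t).sub_const a).fun_pow 2
      exact this.neg.div_const _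
    have := ((h1.exp).const_mul (-σ ^ 2))
    convert this using 1
    · rfl
    · rfl
    field_simp
  have hint : IntegrableOn (fun t : ℝ => (t - a) * Real.exp (-(t - a) ^ 2 / (2 * σ ^ 2))) (Ioi 0) := by
    have := (integrable_mul_exp_neg_mul_sq hb).comp_sub_right a
    refine Integrable.integrableOn ?_
    convert this using 2 with t
    rw [neg_div, div_eq_inv_mul, neg_mul]
  have htend : Tendsto (fun t : ℝ => -σ ^ 2 * Real.exp (-(t - a) ^ 2 / (2 * σ ^ 2))) atTop (nhds 0) := by
    simpa using (tendsto_exp_sq σ a hσ).const_mul (-σ ^ 2)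
  have := integral_Ioi_of_hasDerivAt_of_tendsto' hderiv hint htend
  rw [this]
  ring_nf

lemma F_hasDeriv (y : ℝ) :
    HasDerivAt (fun y : ℝ => ∫ s in (0 : ℝ)..y, Real.exp (-s ^ 2)) (Real.exp (-y ^ 2)) y := by
  have hc : Continuous fun s : ℝ => Real.exp (-s ^ 2) := by continuity
  exact intervalIntegral.integral_hasDerivAt_right
    (hc.intervalIntegrable _ _) hc.aestronglyMeasurable.stronglyMeasurableAtFilter hc.continuousAt

lemma F_tendsto :
    Tendsto (fun y : ℝ => ∫ s in (0 : ℝ)..y, Real.exp (-s ^ 2)) atTop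
      (nhds (Real.sqrt Real.pi / 2)) := by
  have hint : IntegrableOn (fun s : ℝ => Real.exp (-s ^ 2)) (Ioi 0) := by
    have := integrable_exp_neg_mul_sq (b := 1) one_pos
    simpa using this.integrableOn
  have := intervalIntegral_tendsto_integral_Ioi (0 : ℝ) hint tendsto_id
  have hval : ∫ s in Ioi (0 : ℝ), Real.exp (-s ^ 2) = Real.sqrt Real.pi / 2 := by
    have := integral_gaussian_Ioi 1
    simpa using this
  rwa [hval] at this

lemma F_neg (c : ℝ) : ∫ s in (0 : ℝ)..(-c), Real.exp (-s ^ 2)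
    = -∫ s in (0 : ℝ)..c, Real.exp (-s ^ 2) := by
  rw [intervalIntegral.integral_symm]
  congr 1
  have := intervalIntegral.integral_comp_neg (a := 0) (b := c) fun s => Real.exp (-s ^ 2)
  simp only [neg_neg, neg_zero] at this
  rw [← this]
  congr 1 with s
  ring_nf

lemma L2 (σ a : ℝ) (hσ : 0 < σ) :
    ∫ t in Ioi (0 : ℝ), Real.exp (-(t - a) ^ 2 / (2 * σ ^ 2))
      = Real.sqrt (2 * Real.pi) * σ / 2 * (1 + erf (a / (Real.sqrt 2 * σ))) := by
  have hs2 : (0 : ℝ) < Real.sqrt 2 := by positivity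
  have hsσ : Real.sqrt 2 * σ ≠ 0 := by positivity
  set G : ℝ → ℝ := fun t => Real.sqrt 2 * σ * ∫ s in (0 : ℝ)..((t - a) / (Real.sqrt 2 * σ)), Real.exp (-s ^ 2) with hG
  have key : ∀ t : ℝ, ((t - a) / (Real.sqrt 2 * σ)) ^ 2 = (t - a) ^ 2 / (2 * σ ^ 2) := by
    intro t
    rw [div_pow, mul_pow, Real.sq_sqrt (by norm_num : (0:ℝ) ≤ 2)]
  have hderiv : ∀ t ∈ Ici (0 : ℝ),
      HasDerivAt G (Real.exp (-(t - a) ^ 2 / (2 * σ ^ 2))) t := by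
    intro t _
    have h1 : HasDerivAt (fun t : ℝ => (t - a) / (Real.sqrt 2 * σ)) (1 / (Real.sqrt 2 * σ)) t := by
      simpa using ((hasDerivAt_id t).sub_const a).div_const (Real.sqrt 2 * σ)
    have h2 := (F_hasDeriv ((t - a) / (Real.sqrt 2 * σ))).comp t h1
    have h3 := h2.const_mul (Real.sqrt 2 * σ)
    convert h3 using 1
    · rfl
    · rfl
    · rfl
    rw [key t]
    field_simp
  have hint : IntegrableOn (fun t : ℝ => Real.exp (-(t - a) ^ 2 / (2 * σ ^ 2))) (Ioi 0) := by
    have hb : (0 : ℝ) < (2 * σ ^ 2)⁻¹ := by positivity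
    have := (integrable_exp_neg_mul_sq hb).comp_sub_right a
    refine Integrable.integrableOn ?_
    convert this using 2 with t
    rw [neg_div, div_eq_inv_mul, neg_mul]
  have htend : Tendsto G atTop (nhds (Real.sqrt 2 * σ * (Real.sqrt Real.pi / 2))) := by
    apply Tendsto.const_mul
    apply F_tendsto.comp
    apply Tendsto.atTop_div_const (by positivity)
    exact tendsto_atTop_add_const_right _ (-a) tendsto_id
  have := integral_Ioi_of_hasDerivAt_of_tendsto' hderiv hint htend
  rw [this, hG]
  simp only [zero_sub]
  rw [show (-a) / (Real.sqrt 2 * σ) = -(a / (Real.sqrt 2 * σ)) by ring, F_neg]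
  rw [erf]
  have hsqrt : Real.sqrt (2 * Real.pi) = Real.sqrt 2 * Real.sqrt Real.pi :=
    Real.sqrt_mul (by norm_num) _
  have hπ : Real.sqrt Real.pi ≠ 0 := by positivity
  rw [hsqrt]
  field_simp [hsqrt]
  ring

lemma gauss_norm (σ a : ℝ) (hσ : 0 < σ) :
    ∫ t : ℝ, (Real.sqrt (2 * Real.pi) * σ)⁻¹ * Real.exp (-(a - t) ^ 2 / (2 * σ ^ 2)) = 1 := by
  have hb : (0 : ℝ) < (2 * σ ^ 2)⁻¹ := by positivity
  rw [integral_const_mul]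
  have h1 : (fun t : ℝ => Real.exp (-(a - t) ^ 2 / (2 * σ ^ 2)))
      = fun t : ℝ => (fun u : ℝ => Real.exp (-u ^ 2 / (2 * σ ^ 2))) (t - a) := by
    funext t; rw [show (a - t) ^ 2 = (t - a) ^ 2 by ring]
  rw [h1, integral_sub_right_eq_self (fun u : ℝ => Real.exp (-u ^ 2 / (2 * σ ^ 2))) a]
  have h2 : (fun u : ℝ => Real.exp (-u ^ 2 / (2 * σ ^ 2)))
      = fun u : ℝ => Real.exp (-(2 * σ ^ 2)⁻¹ * u ^ 2) := by
    funext u; rw [neg_div, div_eq_inv_mul, neg_mul]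
  rw [h2, integral_gaussian]
  rw [show Real.pi / (2 * σ ^ 2)⁻¹ = 2 * Real.pi * σ ^ 2 by field_simp]
  have hs : Real.sqrt (2 * Real.pi * σ ^ 2) = Real.sqrt (2 * Real.pi) * σ := by
    rw [show 2 * Real.pi * σ ^ 2 = (2 * Real.pi) * σ ^ 2 by ring,
      Real.sqrt_mul (by positivity : (0:ℝ) ≤ 2 * Real.pi), Real.sqrt_sq hσ.le]
  rw [hs]
  have : Real.sqrt (2 * Real.pi) * σ ≠ 0 := by positivity
  field_simp

lemma oneD (σ a : ℝ) (hσ : 0 < σ) :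
    ∫ t : ℝ, max 0 t * ((Real.sqrt (2 * Real.pi) * σ)⁻¹ * Real.exp (-(a - t) ^ 2 / (2 * σ ^ 2)))
      = σ / Real.sqrt (2 * Real.pi) * Real.exp (-a ^ 2 / (2 * σ ^ 2))
        + (1 / 2) * a * (1 + erf (a / (Real.sqrt 2 * σ))) := by
  have hb : (0 : ℝ) < (2 * σ ^ 2)⁻¹ := by positivity
  have hsp : (0 : ℝ) < Real.sqrt (2 * Real.pi) := by positivity
  set c : ℝ := (Real.sqrt (2 * Real.pi) * σ)⁻¹ with hc
  have hcpos : 0 < c := by positivity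
  have hind : (fun t : ℝ => max 0 t * (c * Real.exp (-(a - t) ^ 2 / (2 * σ ^ 2))))
      = Set.indicator (Ioi (0:ℝ)) (fun t => t * (c * Real.exp (-(t - a) ^ 2 / (2 * σ ^ 2)))) := by
    funext t
    rw [show (a - t) ^ 2 = (t - a) ^ 2 by ring]
    by_cases ht : t ∈ Ioi (0:ℝ)
    · rw [Set.indicator_of_mem ht, max_eq_right (le_of_lt ht)]
    · rw [Set.indicator_of_notMem ht, max_eq_left (le_of_not_gt ht), zero_mul]
  rw [hind, integral_indicator measurableSet_Ioi]
  have hint1 : IntegrableOn (fun t : ℝ => (t - a) * Real.exp (-(t - a) ^ 2 / (2 * σ ^ 2))) (Ioi 0) := by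
    have := (integrable_mul_exp_neg_mul_sq hb).comp_sub_right a
    refine Integrable.integrableOn ?_
    convert this using 2 with t
    rw [neg_div, div_eq_inv_mul, neg_mul]
  have hint2 : IntegrableOn (fun t : ℝ => Real.exp (-(t - a) ^ 2 / (2 * σ ^ 2))) (Ioi 0) := by
    have := (integrable_exp_neg_mul_sq hb).comp_sub_right a
    refine Integrable.integrableOn ?_
    convert this using 2 with t
    rw [neg_div, div_eq_inv_mul, neg_mul]
  have hsplit : ∀ t : ℝ, t * (c * Real.exp (-(t - a) ^ 2 / (2 * σ ^ 2)))
      = c * ((t - a) * Real.exp (-(t - a) ^ 2 / (2 * σ ^ 2)))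
        + (c * a) * Real.exp (-(t - a) ^ 2 / (2 * σ ^ 2)) := by
    intro t; ring
  simp_rw [hsplit]
  rw [integral_add ((hint1.const_mul c)) ((hint2.const_mul (c * a))),
    integral_const_mul, integral_const_mul, L1 σ a hσ, L2 σ a hσ, hc]
  have hne : Real.sqrt (2 * Real.pi) * σ ≠ 0 := by positivity
  field_simp

theorem gaussian_smoothing_relu_linear (σ : ℝ) (hσ : 0 < σ) (n : ℕ) (hn : 1 ≤ n)
    (x w : EuclideanSpace ℝ (Fin n)) (hx : x ≠ 0) :
    (∫ t : EuclideanSpace ℝ (Fin n), max 0 ⟪t, x⟫ * gaussKernel σ (w - t)) =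
      (σ * ‖x‖ / Real.sqrt (2 * Real.pi)) *
          Real.exp (-⟪w, x⟫ ^ 2 / (2 * σ ^ 2 * ‖x‖ ^ 2)) +
        (1 / 2) * ⟪w, x⟫ * (1 + erf (⟪w, x⟫ / (Real.sqrt 2 * σ * ‖x‖))) := by
  classical
  have hxpos : (0 : ℝ) < ‖x‖ := norm_pos_iff.mpr hx
  set i0 : Fin n := ⟨0, hn⟩ with hi0
  have hcard : Module.finrank ℝ (EuclideanSpace ℝ (Fin n)) = Fintype.card (Fin n) := by
    simp [finrank_euclideanSpace]
  have hortho : Orthonormal ℝ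
      (({i0} : Set (Fin n)).restrict (fun _ : Fin n => (‖x‖⁻¹ • x : EuclideanSpace ℝ (Fin n)))) := by
    constructor
    · rintro ⟨i, hi⟩
      simp only [Set.restrict, Set.domRestrict, norm_smul, norm_inv, norm_norm]
      exact inv_mul_cancel₀ hxpos.ne'
    · rintro ⟨i, hi⟩ ⟨j, hj⟩ hij
      exact absurd (Subtype.ext ((Set.mem_singleton_iff.mp hi).trans
        (Set.mem_singleton_iff.mp hj).symm)) hij
  obtain ⟨b, hb⟩ := hortho.exists_orthonormalBasis_extension_of_card_eq hcard
  have hbi0 : b i0 = ‖x‖⁻¹ • x := hb i0 rfl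
  set c : ℝ := (Real.sqrt (2 * Real.pi) * σ)⁻¹ with hc
  set w' : EuclideanSpace ℝ (Fin n) := b.repr w with hw'
  -- step 1 : rotate
  have step1 : (∫ t : EuclideanSpace ℝ (Fin n), max 0 ⟪t, x⟫ * gaussKernel σ (w - t))
      = ∫ y : EuclideanSpace ℝ (Fin n),
          max 0 (‖x‖ * y i0) * (c ^ n * Real.exp (-‖w' - y‖ ^ 2 / (2 * σ ^ 2))) := by
    rw [← (b.measurePreserving_repr_symm).integral_comp
      (b.repr.symm.toHomeomorph.measurableEmbedding)
      (fun t => max 0 ⟪t, x⟫ * gaussKernel σ (w - t))]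
    congr 1
    funext y
    have hinner : ⟪b.repr.symm y, x⟫ = ‖x‖ * y i0 := by
      have hx' : x = ‖x‖ • b i0 := by
        rw [hbi0, smul_smul, mul_inv_cancel₀ hxpos.ne', one_smul]
      nth_rewrite 1 [hx']
      rw [real_inner_smul_right, real_inner_comm, ← OrthonormalBasis.repr_apply_apply,
        LinearIsometryEquiv.apply_symm_apply]
    have hnorm : ‖w - b.repr.symm y‖ = ‖w' - y‖ := by
      rw [← b.repr.norm_map (w - b.repr.symm y), map_sub, LinearIsometryEquiv.apply_symm_apply]
    rw [gaussKernel, hinner, hnorm]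
  rw [step1]
  -- step 2 : to Pi space
  set F : Fin n → ℝ → ℝ := fun i t =>
    (if i = i0 then max 0 (‖x‖ * t) else 1) * (c * Real.exp (-(w' i - t) ^ 2 / (2 * σ ^ 2)))
    with hF
  have step2 : (∫ y : EuclideanSpace ℝ (Fin n),
        max 0 (‖x‖ * y i0) * (c ^ n * Real.exp (-‖w' - y‖ ^ 2 / (2 * σ ^ 2))))
      = ∫ z : Fin n → ℝ, ∏ i, F i (z i) := by
    rw [← ((EuclideanSpace.volume_preserving_symm_measurableEquiv_toLp (Fin n)).symm).integral_comp'
      (fun y => max 0 (‖x‖ * y i0) * (c ^ n * Real.exp (-‖w' - y‖ ^ 2 / (2 * σ ^ 2))))]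
    congr 1
    funext z
    have hcoord : ∀ i, ((MeasurableEquiv.toLp 2 (Fin n → ℝ)).symm.symm z) i = z i := fun i => rfl
    have hnormsq : ‖w' - (MeasurableEquiv.toLp 2 (Fin n → ℝ)).symm.symm z‖ ^ 2
        = ∑ i, (w' i - z i) ^ 2 := by
      rw [EuclideanSpace.norm_eq, Real.sq_sqrt (by positivity)]
      congr 1
      funext i
      simp [hcoord, Real.norm_eq_abs, sq_abs]
    rw [hnormsq, hcoord]
    rw [hF]
    simp only []
    rw [Finset.prod_mul_distrib, Finset.prod_ite_eq' Finset.univ i0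
      (fun i => max 0 (‖x‖ * z i))]
    simp only [Finset.mem_univ, if_true]
    rw [Finset.prod_mul_distrib, Finset.prod_const, Finset.card_univ, Fintype.card_fin]
    rw [← Real.exp_sum]
    congr 2
    rw [← Finset.sum_div, ← Finset.sum_neg_distrib]
  rw [step2, MeasureTheory.integral_fintype_prod_volume_eq_prod F]
  -- step 3 : evaluate the product
  have hval : ∀ i, i ≠ i0 → ∫ t : ℝ, F i t = 1 := by
    intro i hi
    have : F i = fun t => c * Real.exp (-(w' i - t) ^ 2 / (2 * σ ^ 2)) := by
      funext t; rw [hF]; simp [hi]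
    rw [this]
    exact gauss_norm σ (w' i) hσ
  rw [Finset.prod_eq_single i0 (fun i _ hi => hval i hi) (fun h => absurd (Finset.mem_univ i0) h)]
  have hFi0 : (∫ t : ℝ, F i0 t)
      = ‖x‖ * ∫ t : ℝ, max 0 t * (c * Real.exp (-(w' i0 - t) ^ 2 / (2 * σ ^ 2))) := by
    rw [← integral_const_mul]
    congr 1
    funext t
    rw [hF]
    simp only [if_pos rfl, if_true]
    rw [show ‖x‖ * (max 0 t * (c * Real.exp (-(w' i0 - t) ^ 2 / (2 * σ ^ 2))))
      = (‖x‖ * max 0 t) * (c * Real.exp (-(w' i0 - t) ^ 2 / (2 * σ ^ 2))) by ring,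
      mul_max_of_nonneg _ _ (norm_nonneg x), mul_zero]
  rw [hFi0, oneD σ (w' i0) hσ]
  -- step 4 : algebra
  have hwi0 : w' i0 = ⟪w, x⟫ / ‖x‖ := by
    rw [hw', OrthonormalBasis.repr_apply_apply, hbi0, real_inner_smul_left, real_inner_comm,
      div_eq_inv_mul]
  rw [hwi0]
  set p : ℝ := ⟪w, x⟫
  have e1 : -(p / ‖x‖) ^ 2 / (2 * σ ^ 2) = -p ^ 2 / (2 * σ ^ 2 * ‖x‖ ^ 2) := by
    field_simp
  have e2 : p / ‖x‖ / (Real.sqrt 2 * σ) = p / (Real.sqrt 2 * σ * ‖x‖) := by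
    rw [div_div]
    ring_nf
  rw [e1, e2]
  field_simp
end
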